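/- Let G be a finitely generated group and {X_n} an exhaustive sequence of finite subsets such that the sequence {X_n^{-1}} is amenable (a Følner sequence). Then the Besicovitch pseudodistance d_{B,{X_n}} on Q^G is invariant under translations: d_{B,{X_n}}(c_1^g, c_2^g) = d_{B,{X_n}}(c_1, c_2) for all configurations c_1, c_2 and all g ∈ G, where c^g(h) = c(gh). -/

import Mathlib

open Filter Pointwise

noncomputable def hamDist {G Q : Type*} (U : Set G) (c₁ c₂ : G → Q) : ℕ :=
  {x ∈ U | c₁ x ≠ c₂ x}.ncard

noncomputable def besDist {G Q : Type*} (X : ℕ → Finset G) (c₁ c₂ : G → Q) : ℝ :=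
  limsup (fun n => (hamDist (X n : Set G) c₁ c₂ : ℝ) / (X n).card) atTop

def IsExhaustive {G : Type*} (X : ℕ → Finset G) : Prop :=
  (∀ n, X n ⊆ X (n + 1)) ∧ ∀ g : G, ∃ n, g ∈ X n

/-- An amenable (Følner) exhaustive sequence: `|X_n E⁻¹ \ X_n| / |X_n| → 0`
for every finite `E`. -/
def IsFolner {G : Type*} [Group G] [DecidableEq G] (X : ℕ → Finset G) : Prop :=
  IsExhaustive X ∧ ∀ E : Finset G,
    Tendsto (fun n => (((X n * E⁻¹) \ X n).card : ℝ) / (X n).card) atTop (nhds 0)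

private lemma limsup_le_of_tendsto_sub_zero (u v : ℕ → ℝ)
    (hv0 : ∀ n, 0 ≤ v n) (hv1 : ∀ n, v n ≤ 1)
    (h : Tendsto (fun n => u n - v n) atTop (nhds 0)) :
    limsup u atTop ≤ limsup v atTop := by
  refine le_of_forall_pos_le_add fun ε hε => ?_
  have hev : ∀ᶠ n in atTop, u n ≤ v n + ε := by
    filter_upwards [h.eventually (gt_mem_nhds hε)] with n hn
    linarith
  have hcb : IsCoboundedUnder (· ≤ ·) atTop u := by
    have : ∀ᶠ n in atTop, (0:ℝ) - ε ≤ u n := by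
      filter_upwards [h.eventually (eventually_gt_nhds (neg_neg_of_pos hε))] with n hn
      have := hv0 n; linarith
    exact (isBoundedUnder_of_eventually_ge this).isCoboundedUnder_le
  have hbv : IsBoundedUnder (· ≤ ·) atTop v := isBoundedUnder_of ⟨1, fun n => hv1 n⟩
  have hbve : IsBoundedUnder (· ≤ ·) atTop (fun n => v n + ε) :=
    isBoundedUnder_of ⟨1 + ε, fun n => add_le_add_left (hv1 n) ε⟩
  calc limsup u atTop ≤ limsup (fun n => v n + ε) atTop := limsup_le_limsup hev hcb hbve
    _ = limsup v atTop + ε := limsup_add_const atTop v ε hbv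
        ((isBoundedUnder_of ⟨0, fun n => hv0 n⟩ : IsBoundedUnder (· ≥ ·) atTop v).isCoboundedUnder_le)

private lemma limsup_eq_of_tendsto_sub_zero (u v : ℕ → ℝ)
    (hu0 : ∀ n, 0 ≤ u n) (hu1 : ∀ n, u n ≤ 1)
    (hv0 : ∀ n, 0 ≤ v n) (hv1 : ∀ n, v n ≤ 1)
    (h : Tendsto (fun n => u n - v n) atTop (nhds 0)) :
    limsup u atTop = limsup v atTop := by
  refine le_antisymm (limsup_le_of_tendsto_sub_zero u v hv0 hv1 h)
    (limsup_le_of_tendsto_sub_zero v u hu0 hu1 ?_)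
  have : (fun n => v n - u n) = (fun n => -(u n - v n)) := by funext n; ring
  rw [this, ← neg_zero]
  exact h.neg
open Filter Pointwise
private lemma hamDist_coe {G Q : Type*} [DecidableEq Q] (F : Finset G) (d₁ d₂ : G → Q) :
    hamDist (F : Set G) d₁ d₂ = (F.filter fun x => d₁ x ≠ d₂ x).card := by
  rw [hamDist, show {x ∈ (F:Set G) | d₁ x ≠ d₂ x}
      = ((F.filter fun x => d₁ x ≠ d₂ x) : Set G) by ext x; simp]
  exact Set.ncard_coe_finset _

private lemma filter_smul_card {G Q : Type*} [Group G] [DecidableEq G] [DecidableEq Q]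
    (S : Finset G) (g : G) (c₁ c₂ : G → Q) :
    (S.filter fun x => c₁ (g*x) ≠ c₂ (g*x)).card = ((g • S).filter fun x => c₁ x ≠ c₂ x).card := by
  rw [← Finset.card_smul_finset g]
  congr 1
  ext x
  simp only [Finset.mem_smul_finset, Finset.mem_filter]
  constructor
  · rintro ⟨y, ⟨hy, hne⟩, rfl⟩; exact ⟨⟨y, hy, rfl⟩, hne⟩
  · rintro ⟨⟨y, hy, rfl⟩, hne⟩; exact ⟨y, ⟨hy, hne⟩, rfl⟩

private lemma folner_smul {G : Type*} [Group G] [DecidableEq G] (X : ℕ → Finset G)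
    (hXinv : ∀ E : Finset G,
      Tendsto (fun n => ((((X n)⁻¹ * E⁻¹) \ (X n)⁻¹).card : ℝ) / ((X n)⁻¹).card) atTop (nhds 0))
    (g : G) :
    Tendsto (fun n => (((g • X n) \ X n).card : ℝ) / (X n).card) atTop (nhds 0) := by
  have key : ∀ n, ((X n)⁻¹ * ({g} : Finset G)⁻¹) \ (X n)⁻¹ = ((g • X n) \ X n)⁻¹ := by
    intro n
    have h1 : (X n)⁻¹ * ({g} : Finset G)⁻¹ = (g • X n)⁻¹ := by
      ext x; simp [Finset.mem_mul, Finset.mem_inv', Finset.mem_smul_finset]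
    have h2 : ∀ S T : Finset G, (S \ T)⁻¹ = S⁻¹ \ T⁻¹ := by
      intro S T; ext x; simp [Finset.mem_inv']
    rw [h1, h2]
  have heq : (fun n => ((((g • X n) \ X n).card : ℝ)) / (X n).card)
      = fun n => ((((X n)⁻¹ * ({g} : Finset G)⁻¹) \ (X n)⁻¹).card : ℝ) / ((X n)⁻¹).card := by
    funext n; rw [key n, Finset.card_inv, Finset.card_inv]
  rw [heq]; exact hXinv {g}

private lemma sdiff_smul_card {G : Type*} [Group G] [DecidableEq G] (S : Finset G) (g : G) :
    ((g⁻¹ • S) \ S).card = (S \ (g • S)).card := by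
  rw [← Finset.card_smul_finset g ((g⁻¹ • S) \ S), Finset.smul_finset_sdiff, smul_inv_smul]


theorem besicovitch_translation_invariant_of_folner_inv
    {G Q : Type*} [Group G] [DecidableEq G] [Fintype Q] (hQ : 2 ≤ Fintype.card Q)
    (X : ℕ → Finset G) (hX : IsExhaustive X) (hXinv : IsFolner (fun n => (X n)⁻¹)) :
    ∀ (g : G) (c₁ c₂ : G → Q),
      besDist X (fun h => c₁ (g * h)) (fun h => c₂ (g * h)) = besDist X c₁ c₂ := by
  classical
  intro g c₁ c₂
  set A : ℕ → Finset G := fun n => (g • X n).filter fun x => c₁ x ≠ c₂ x with hA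
  set B : ℕ → Finset G := fun n => (X n).filter fun x => c₁ x ≠ c₂ x with hB
  set u : ℕ → ℝ := fun n => ((A n).card : ℝ) / (X n).card with hu
  set v : ℕ → ℝ := fun n => ((B n).card : ℝ) / (X n).card with hv
  have hL : besDist X (fun h => c₁ (g * h)) (fun h => c₂ (g * h)) = limsup u atTop := by
    unfold besDist
    congr 1; funext n
    rw [hamDist_coe, filter_smul_card]
  have hR : besDist X c₁ c₂ = limsup v atTop := by
    unfold besDist
    congr 1; funext n
    rw [hamDist_coe]
  rw [hL, hR]
  have hXf : ∀ E : Finset G,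
      Tendsto (fun n => ((((X n)⁻¹ * E⁻¹) \ (X n)⁻¹).card : ℝ) / ((X n)⁻¹).card)
        atTop (nhds 0) := hXinv.2
  have hcard : ∀ n, (A n).card ≤ (X n).card := fun n =>
    le_trans (Finset.card_le_card (Finset.filter_subset _ _)) (Finset.card_smul_finset g (X n)).le
  have hu0 : ∀ n, 0 ≤ u n := fun n => div_nonneg (Nat.cast_nonneg _) (Nat.cast_nonneg _)
  have hu1 : ∀ n, u n ≤ 1 := fun n =>
    div_le_one_of_le₀ (Nat.cast_le.mpr (hcard n)) (Nat.cast_nonneg _)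
  have hv0 : ∀ n, 0 ≤ v n := fun n => div_nonneg (Nat.cast_nonneg _) (Nat.cast_nonneg _)
  have hv1 : ∀ n, v n ≤ 1 := fun n =>
    div_le_one_of_le₀ (Nat.cast_le.mpr (Finset.card_le_card (Finset.filter_subset _ _)))
      (Nat.cast_nonneg _)
  set w : ℕ → ℝ := fun n =>
    ((((g • X n) \ X n).card : ℝ) + ((X n \ (g • X n)).card : ℝ)) / (X n).card with hw
  have hwlim : Tendsto w atTop (nhds 0) := by
    have h1 := folner_smul X hXf g
    have h2 := folner_smul X hXf g⁻¹
    have h2' : Tendsto (fun n => (((X n) \ (g • X n)).card : ℝ) / (X n).card) atTop (nhds 0) := by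
      have : (fun n => (((X n) \ (g • X n)).card : ℝ) / (X n).card)
          = fun n => (((g⁻¹ • X n) \ X n).card : ℝ) / (X n).card := by
        funext n; rw [sdiff_smul_card]
      rw [this]; exact h2
    have := h1.add h2'
    simpa [hw, add_div] using this
  have hbound : ∀ n, |u n - v n| ≤ w n := by
    intro n
    have hAB : (A n) \ (B n) ⊆ (g • X n) \ X n := by
      intro x hx
      simp only [hA, hB, Finset.mem_sdiff, Finset.mem_filter, not_and] at hx
      exact Finset.mem_sdiff.mpr ⟨hx.1.1, fun hxX => hx.2 hxX hx.1.2⟩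
    have hBA : (B n) \ (A n) ⊆ X n \ (g • X n) := by
      intro x hx
      simp only [hA, hB, Finset.mem_sdiff, Finset.mem_filter, not_and] at hx
      exact Finset.mem_sdiff.mpr ⟨hx.1.1, fun hxX => hx.2 hxX hx.1.2⟩
    have h1 : (A n).card ≤ ((g • X n) \ X n).card + (B n).card :=
      le_trans Finset.card_le_card_sdiff_add_card
        (add_le_add_left (Finset.card_le_card hAB) _)
    have h2 : (B n).card ≤ (X n \ (g • X n)).card + (A n).card :=
      le_trans Finset.card_le_card_sdiff_add_card
        (add_le_add_left (Finset.card_le_card hBA) _)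
    have habs : |((A n).card : ℝ) - ((B n).card : ℝ)|
        ≤ (((g • X n) \ X n).card : ℝ) + ((X n \ (g • X n)).card : ℝ) := by
      rw [abs_sub_le_iff]
      constructor
      · have := (Nat.cast_le (α := ℝ)).mpr h1
        push_cast at this ⊢
        have h0 : (0:ℝ) ≤ ((X n \ (g • X n)).card : ℝ) := Nat.cast_nonneg _
        linarith
      · have := (Nat.cast_le (α := ℝ)).mpr h2
        push_cast at this ⊢
        have h0 : (0:ℝ) ≤ (((g • X n) \ X n).card : ℝ) := Nat.cast_nonneg _
        linarith
    have : |u n - v n| = |((A n).card : ℝ) - ((B n).card : ℝ)| / (X n).card := by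
      rw [hu, hv, div_sub_div_same, abs_div, abs_of_nonneg (Nat.cast_nonneg (X n).card : (0:ℝ) ≤ _)]
    rw [this, hw]
    exact div_le_div_of_nonneg_right habs (Nat.cast_nonneg _)
  have hsub : Tendsto (fun n => u n - v n) atTop (nhds 0) :=
    squeeze_zero_norm (fun n => hbound n) hwlim
  exact limsup_eq_of_tendsto_sub_zero u v hu0 hu1 hv0 hv1 hsub
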